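/- Let N be a finite set, f : 2^N → ℝ, and 0 < γ ≤ γ̄ ≤ 1. If f satisfies condition (ii) with ratio γ and condition (iii) with ratio γ̄, then for all S, T ⊆ N and all distinct j₁, j₂ ∈ T∖S: f(S ∪ T) − f(S) ≤ f({j₁}∣S) + (1/γ̄)·f({j₂}∣S) + Σ_{j ∈ T∖(S∪{j₁,j₂})} (1/γ)·f({j}∣S). (Upper-bound half of the proof of Proposition 1, (iii) ⇒ (iv).) -/

import Mathlib

/-- Upper-bound half of the proof of Proposition 1, (iii) ⇒ (iv): if `f` satisfies
condition (ii) with ratio `γ` and condition (iii) with ratio `γ̄`, then for all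
`S, T ⊆ N` and distinct `j₁, j₂ ∈ T \ S`:
`f(S ∪ T) - f S ≤ f({j₁}∣S) + (1/γ̄)·f({j₂}∣S) + Σ_{j ∈ T∖(S∪{j₁,j₂})} (1/γ)·f({j}∣S)`. -/
theorem prop1_iii_imp_iv_upper {α : Type*} [DecidableEq α] (N : Finset α)
    (f : Finset α → ℝ) (γ γb : ℝ) (hγ0 : 0 < γ) (hγγb : γ ≤ γb) (hγb1 : γb ≤ 1)
    (hii : ∀ S T : Finset α, S ⊆ T → T ⊆ N → ∀ i ∈ N, i ∉ T →
      f (insert i S) - f S ≥ γ * (f (insert i T) - f T))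
    (hiii : ∀ S : Finset α, S ⊆ N → ∀ e ∈ N, ∀ i ∈ N, i ∉ S → i ≠ e →
      f (insert i S) - f S ≥ γb * (f (insert i (insert e S)) - f (insert e S))) :
    ∀ S T : Finset α, S ⊆ N → T ⊆ N → ∀ j₁ ∈ T \ S, ∀ j₂ ∈ T \ S, j₁ ≠ j₂ →
      f (S ∪ T) - f S ≤
        (f (insert j₁ S) - f S) + (1 / γb) * (f (insert j₂ S) - f S) +
          ∑ j ∈ T \ (S ∪ {j₁, j₂}), (1 / γ) * (f (insert j S) - f S) := by
  intro S T hSN hTN j₁ hj₁ j₂ hj₂ hne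
  have hγb0 : (0:ℝ) < γb := lt_of_lt_of_le hγ0 hγγb
  rw [Finset.mem_sdiff] at hj₁ hj₂
  -- auxiliary chain lemma
  have aux : ∀ R : Finset α, R ⊆ N → ∀ B : Finset α, S ⊆ B → B ⊆ N → Disjoint R B →
      f (B ∪ R) - f B ≤ ∑ j ∈ R, (1 / γ) * (f (insert j S) - f S) := by
    intro R
    induction R using Finset.induction_on with
    | empty => intro _ B _ _ _; simp
    | insert a R ha ih =>
      intro hRN B hSB hBN hdisj
      have haN : a ∈ N := hRN (Finset.mem_insert_self a R)
      have hRN' : R ⊆ N := fun x hx => hRN (Finset.mem_insert_of_mem hx)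
      have hdisj' : Disjoint R B := (Finset.disjoint_insert_left.mp hdisj).2
      have haB : a ∉ B := (Finset.disjoint_insert_left.mp hdisj).1
      have haBR : a ∉ B ∪ R := by
        simp [Finset.mem_union, haB, ha]
      have hBRN : B ∪ R ⊆ N := Finset.union_subset hBN hRN'
      have hSBR : S ⊆ B ∪ R := hSB.trans Finset.subset_union_left
      have h1 := hii S (B ∪ R) hSBR hBRN a haN haBR
      have hstep : f (insert a (B ∪ R)) - f (B ∪ R) ≤ (1 / γ) * (f (insert a S) - f S) := by
        rw [ge_iff_le] at h1
        rw [div_mul_eq_mul_div, le_div_iff₀ hγ0]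
        linarith
      rw [Finset.union_insert, Finset.sum_insert ha]
      have ihB := ih hRN' B hSB hBN hdisj'
      linarith
  -- main argument
  set A : Finset α := insert j₂ (insert j₁ S) with hA
  have hAeq : A ∪ (T \ (S ∪ {j₁, j₂})) = S ∪ T := by
    ext x
    simp only [hA, Finset.mem_union, Finset.mem_insert, Finset.mem_sdiff,
      Finset.mem_singleton]
    have h1 := hj₁.1
    have h2 := hj₂.1
    constructor
    · rintro ((rfl | rfl | h) | h)
      · exact Or.inr h2
      · exact Or.inr h1
      · exact Or.inl h
      · exact Or.inr h.1
    · intro h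
      by_cases e1 : x = j₁
      · tauto
      · by_cases e2 : x = j₂
        · tauto
        · by_cases hS : x ∈ S
          · tauto
          · rcases h with h | h
            · tauto
            · exact Or.inr ⟨h, by tauto⟩
  have hRN : T \ (S ∪ {j₁, j₂}) ⊆ N := (Finset.sdiff_subset).trans hTN
  have hSA : S ⊆ A := (Finset.subset_insert _ _).trans (Finset.subset_insert _ _)
  have hAN : A ⊆ N := by
    intro x hx
    simp only [hA, Finset.mem_insert] at hx
    rcases hx with rfl | rfl | h
    · exact hTN hj₂.1
    · exact hTN hj₁.1
    · exact hSN h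
  have hdisj : Disjoint (T \ (S ∪ {j₁, j₂})) A := by
    rw [Finset.disjoint_left]
    intro x hx hxA
    simp only [Finset.mem_sdiff, Finset.mem_union, Finset.mem_insert,
      Finset.mem_singleton] at hx
    simp only [hA, Finset.mem_insert] at hxA
    tauto
  have hchain := aux (T \ (S ∪ {j₁, j₂})) hRN A hSA hAN hdisj
  rw [hAeq] at hchain
  -- bound f A - f (insert j₁ S)
  have h2 := hiii S hSN j₁ (hTN hj₁.1) j₂ (hTN hj₂.1) hj₂.2 (Ne.symm hne)
  have hstep2 : f A - f (insert j₁ S) ≤ (1 / γb) * (f (insert j₂ S) - f S) := by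
    rw [ge_iff_le] at h2
    rw [div_mul_eq_mul_div, le_div_iff₀ hγb0]
    simp only [hA]
    linarith
  linarith
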